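/- Let v₁, …, vₙ ∈ ℝ³ (n ≥ 4) be the vertices of a closed polygon with edges eᵢ = e(vᵢ, vᵢ₊₁) (indices mod n), and let d > 0 be a lower bound for the distance between any two non-adjacent edges. If v'ᵢ ∈ ℝ³ satisfy ‖vᵢ − v'ᵢ‖ < r with r < d/4, then for each i the midpoint mᵢ of eᵢ has distance at least d/2 = 2r from every edge eⱼ with j ≠ i, and the plane disk Dᵢ of radius r centered at mᵢ perpendicular to eᵢ is disjoint from every segment e(v'ⱼ, vⱼ) and meets the polygonal loop through v'₁, v₁, v'₂, v₂, …, v'ₙ, vₙ in exactly one point, lying on the segment e(vᵢ, v'ᵢ₊₁). -/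

import Mathlib

open Set

section Aux
variable {V : Type*} [NormedAddCommGroup V] [NormedSpace ℝ V]

lemma seg_param' {a b q : V} (hq : q ∈ segment ℝ a b) :
    ∃ t : ℝ, 0 ≤ t ∧ t ≤ 1 ∧ q = a + t • (b - a) := by
  rw [segment_eq_image'] at hq
  obtain ⟨t, ⟨h0, h1⟩, rfl⟩ := hq
  exact ⟨t, h0, h1, rfl⟩

lemma seg_mem' {a b : V} {t : ℝ} (h0 : 0 ≤ t) (h1 : t ≤ 1) :
    a + t • (b - a) ∈ segment ℝ a b := by
  rw [segment_eq_image']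
  exact ⟨t, ⟨h0, h1⟩, rfl⟩

lemma dist_to_right' {a b q : V} (hq : q ∈ segment ℝ a b) :
    dist q b ≤ dist a b := by
  obtain ⟨t, h0, h1, rfl⟩ := seg_param' hq
  have hid : a + t • (b - a) - b = (1 - t) • (a - b) := by module
  rw [dist_eq_norm, dist_eq_norm, hid, norm_smul, Real.norm_eq_abs,
    abs_of_nonneg (by linarith)]
  nlinarith [norm_nonneg (a - b)]

lemma midpoint_eq_inv_two_smul (x y : V) :
    midpoint ℝ x y = (2⁻¹ : ℝ) • (x + y) := by
  rw [midpoint_eq_smul_add, invOf_eq_inv]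

lemma aux_adj {x y z : V} {d : ℝ} (hd : 0 ≤ d)
    (h1 : ∀ w ∈ segment ℝ y z, d ≤ dist x w)
    (h2 : ∀ p ∈ segment ℝ x y, d ≤ dist p z) :
    ∀ q ∈ segment ℝ y z, d / 2 ≤ dist (midpoint ℝ x y) q := by
  intro q hq
  obtain ⟨t, ht0, ht1, rfl⟩ := seg_param' hq
  have hm := midpoint_eq_inv_two_smul x y
  rw [dist_eq_norm]
  rcases le_or_gt t 2⁻¹ with ht | ht
  · have hw := h1 _ (seg_mem' (a := y) (b := z) (t := 2 * t)
      (by linarith) (by linarith))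
    rw [dist_eq_norm] at hw
    have hid : x - (y + (2 * t) • (z - y)) =
        (2 : ℝ) • (midpoint ℝ x y - (y + t • (z - y))) := by
      rw [hm]; module
    rw [hid, norm_smul, Real.norm_eq_abs, abs_of_nonneg (by norm_num)] at hw
    linarith
  · obtain ⟨l, hl0, hl1, rfl⟩ : ∃ l : ℝ, 0 ≤ l ∧ l ≤ 1 ∧ t = (1 + l) / 2 :=
      ⟨2 * t - 1, by linarith, by linarith, by ring⟩
    have hpos : (0 : ℝ) < 1 + l := by linarith
    have hp := h2 (x + (l / (1 + l)) • (y - x))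
      (seg_mem' (by positivity) (by rw [div_le_one hpos]; linarith))
    rw [dist_eq_norm] at hp
    have hid : (2 : ℝ) • (midpoint ℝ x y - (y + ((1 + l) / 2) • (z - y))) =
        (1 + l) • ((x + (l / (1 + l)) • (y - x)) - z) := by
      rw [hm]
      match_scalars <;> field_simp <;> ring
    have hn : 2 * ‖midpoint ℝ x y - (y + ((1 + l) / 2) • (z - y))‖ =
        (1 + l) * ‖(x + (l / (1 + l)) • (y - x)) - z‖ := by
      have h := congrArg norm hid
      rwa [norm_smul, norm_smul, Real.norm_eq_abs, Real.norm_eq_abs,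
        abs_of_nonneg (by norm_num : (0:ℝ) ≤ 2), abs_of_pos hpos] at h
    nlinarith [norm_nonneg ((x + (l / (1 + l)) • (y - x)) - z)]

end Aux

set_option maxHeartbeats 1000000 in
theorem meridian_disk_meets_loop_once
    (n : ℕ) (hn : 4 ≤ n)
    (v v' : ZMod n → EuclideanSpace ℝ (Fin 3))
    (d r : ℝ) (hd : 0 < d) (hr : 0 < r) (hrd : r < d / 4)
    (hsep : ∀ i j : ZMod n, j ≠ i → j ≠ i + 1 → i ≠ j + 1 →
      ∀ p ∈ segment ℝ (v i) (v (i + 1)), ∀ q ∈ segment ℝ (v j) (v (j + 1)),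
        d ≤ dist p q)
    (hv' : ∀ i : ZMod n, ‖v i - v' i‖ < r) :
    ∀ i : ZMod n,
      (∀ j : ZMod n, j ≠ i →
        ∀ q ∈ segment ℝ (v j) (v (j + 1)), d / 2 ≤ dist (midpoint ℝ (v i) (v (i + 1))) q) ∧
      (let D : Set (EuclideanSpace ℝ (Fin 3)) :=
        {q | dist q (midpoint ℝ (v i) (v (i + 1))) ≤ r ∧
             inner ℝ (q - midpoint ℝ (v i) (v (i + 1))) (v (i + 1) - v i) = (0 : ℝ)}
       let loop : Set (EuclideanSpace ℝ (Fin 3)) :=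
        ⋃ j : ZMod n, segment ℝ (v' j) (v j) ∪ segment ℝ (v j) (v' (j + 1))
       (∀ j : ZMod n, ∀ q ∈ segment ℝ (v' j) (v j), q ∉ D) ∧
       (∃! q : EuclideanSpace ℝ (Fin 3), q ∈ D ∩ loop) ∧
       (∀ q ∈ D ∩ loop, q ∈ segment ℝ (v i) (v' (i + 1)))) := by
  -- basic facts about ZMod n
  have hk : ∀ k : ℕ, 0 < k → k < 4 → ((k : ℕ) : ZMod n) ≠ 0 := by
    intro k h1 h2 h
    rw [ZMod.natCast_eq_zero_iff] at h
    have := Nat.le_of_dvd h1 h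
    omega
  have h1z : (1 : ZMod n) ≠ 0 := by simpa using hk 1 (by omega) (by omega)
  have h2z : (2 : ZMod n) ≠ 0 := by simpa using hk 2 (by omega) (by omega)
  have h3z : (3 : ZMod n) ≠ 0 := by simpa using hk 3 (by omega) (by omega)
  -- part A : the midpoint of edge i is at distance ≥ d/2 from every other edge
  have partA : ∀ i j : ZMod n, j ≠ i →
      ∀ q ∈ segment ℝ (v j) (v (j + 1)),
        d / 2 ≤ dist (midpoint ℝ (v i) (v (i + 1))) q := by
    intro i j hji q hq
    by_cases hj1 : j = i + 1
    · subst hj1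
      rw [show i + 1 + 1 = i + 2 by ring] at hq
      refine aux_adj hd.le ?_ ?_ q hq
      · intro w hw
        refine hsep (i - 1) (i + 1)
          (fun h => h2z (by linear_combination h))
          (fun h => h1z (by linear_combination h))
          (fun h => h3z (by linear_combination -h))
          (v i) ?_ w ?_
        · rw [show i - 1 + 1 = i by ring]; exact right_mem_segment ℝ _ _
        · rw [show i + 1 + 1 = i + 2 by ring]; exact hw
      · intro p hp
        refine hsep i (i + 2)
          (fun h => h2z (by linear_combination h))
          (fun h => h1z (by linear_combination h))
          (fun h => h3z (by linear_combination -h))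
          p hp (v (i + 2)) ?_
        exact left_mem_segment ℝ _ _
    · by_cases hj2 : i = j + 1
      · subst hj2
        rw [show j + 1 + 1 = j + 2 by ring, midpoint_comm]
        rw [segment_symm] at hq
        refine aux_adj hd.le ?_ ?_ q hq
        · intro w hw
          rw [segment_symm] at hw
          refine hsep (j + 2) j
            (fun h => h2z (by linear_combination -h))
            (fun h => h3z (by linear_combination -h))
            (fun h => h1z (by linear_combination h))
            (v (j + 2)) ?_ w hw
          rw [show j + 2 + 1 = j + 3 by ring]; exact left_mem_segment ℝ _ _
        · intro p hp
          rw [segment_symm] at hp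
          rw [show (v (j + 2)) = v (j + 1 + 1) by rw [show j + 1 + 1 = j + 2 by ring]] at hp
          refine hsep (j + 1) (j - 1)
            (fun h => h2z (by linear_combination -h))
            (fun h => h3z (by linear_combination -h))
            (fun h => h1z (by linear_combination h))
            p hp (v j) ?_
          rw [show j - 1 + 1 = j by ring]; exact right_mem_segment ℝ _ _
      · have := hsep i j hji hj1 hj2 _ (midpoint_mem_segment (v i) (v (i + 1))) q hq
        linarith
  -- edge lengths are at least d
  have hlen : ∀ i : ZMod n, d ≤ ‖v (i + 1) - v i‖ := by
    intro i
    have h := hsep (i - 1) (i + 1)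
      (fun h => h2z (by linear_combination h))
      (fun h => h1z (by linear_combination h))
      (fun h => h3z (by linear_combination -h))
      (v i) (by rw [show i - 1 + 1 = i by ring]; exact right_mem_segment ℝ _ _)
      (v (i + 1)) (left_mem_segment ℝ _ _)
    rwa [dist_eq_norm, norm_sub_rev] at h
  intro i
  have hmv : ∀ j : ZMod n, d / 2 ≤ dist (midpoint ℝ (v i) (v (i + 1))) (v j) := by
    intro j
    by_cases hji : j = i
    · subst hji
      have h := partA j (j - 1) (fun h => h1z (by linear_combination -h)) (v j)
        (by rw [show j - 1 + 1 = j by ring]; exact right_mem_segment ℝ _ _)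
      exact h
    · exact partA i j hji (v j) (left_mem_segment ℝ _ _)
  -- B1 : the disk misses all segments [v' j, v j]
  have hB1 : ∀ j : ZMod n, ∀ q ∈ segment ℝ (v' j) (v j),
      ¬ dist q (midpoint ℝ (v i) (v (i + 1))) ≤ r := by
    intro j q hq hqr
    have h1 : dist q (v j) < r := by
      have := dist_to_right' hq
      have h2 : dist (v' j) (v j) < r := by
        rw [dist_eq_norm, norm_sub_rev]; exact hv' j
      linarith
    have h2 := hmv j
    have h3 := dist_triangle (midpoint ℝ (v i) (v (i + 1))) q (v j)
    rw [dist_comm q (midpoint ℝ (v i) (v (i + 1)))] at hqr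
    linarith
  -- B3 : any point of the disk on the loop lies on segment [v i, v' (i+1)]
  have hB3 : ∀ q : EuclideanSpace ℝ (Fin 3),
      dist q (midpoint ℝ (v i) (v (i + 1))) ≤ r →
      q ∈ (⋃ j : ZMod n, segment ℝ (v' j) (v j) ∪ segment ℝ (v j) (v' (j + 1))) →
      q ∈ segment ℝ (v i) (v' (i + 1)) := by
    intro q hqr hql
    rw [mem_iUnion] at hql
    obtain ⟨j, hj⟩ := hql
    rcases hj with hj | hj
    · exact absurd hqr (hB1 j q hj)
    · by_cases hji : j = i
      · subst hji; exact hj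
      · exfalso
        obtain ⟨t, ht0, ht1, rfl⟩ := seg_param' hj
        set q0 : EuclideanSpace ℝ (Fin 3) := v j + t • (v (j + 1) - v j) with hq0
        have hq0m : q0 ∈ segment ℝ (v j) (v (j + 1)) := seg_mem' ht0 ht1
        have hdm := partA i j hji q0 hq0m
        have hid : v j + t • (v' (j + 1) - v j) - q0
            = t • (v' (j + 1) - v (j + 1)) := by rw [hq0]; module
        have hqq0 : dist (v j + t • (v' (j + 1) - v j)) q0 < r := by
          rw [dist_eq_norm, hid, norm_smul, Real.norm_eq_abs, abs_of_nonneg ht0]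
          have h5 : ‖v' (j + 1) - v (j + 1)‖ < r := by
            rw [norm_sub_rev]; exact hv' (j + 1)
          nlinarith [norm_nonneg (v' (j + 1) - v (j + 1))]
        have h6 := dist_triangle (midpoint ℝ (v i) (v (i + 1)))
          (v j + t • (v' (j + 1) - v j)) q0
        rw [dist_comm] at hqr
        linarith
  refine ⟨partA i, fun j q hq hmem => hB1 j q hq hmem.1, ?_, fun q hq => hB3 q hq.1.1 hq.2⟩
  -- existence and uniqueness of the intersection point
  set m := midpoint ℝ (v i) (v (i + 1)) with hmdef
  set u : EuclideanSpace ℝ (Fin 3) := v (i + 1) - v i with hudef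
  set w : EuclideanSpace ℝ (Fin 3) := v' (i + 1) - v (i + 1) with hwdef
  have hLd : d ≤ ‖u‖ := hlen i
  have hwr : ‖w‖ < r := by rw [hwdef, norm_sub_rev]; exact hv' (i + 1)
  have hcw : |inner ℝ w u| ≤ ‖w‖ * ‖u‖ := abs_real_inner_le_norm w u
  set c : ℝ := inner ℝ (v' (i + 1) - v i) u with hcdef
  have hvix : v' (i + 1) - v i = u + w := by rw [hudef, hwdef]; module
  have hc : c = ‖u‖ ^ 2 + inner ℝ w u := by
    rw [hcdef, hvix, inner_add_left, real_inner_self_eq_norm_sq]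
  have hupos : 0 < ‖u‖ := by linarith
  have hcbig : ‖u‖ ^ 2 / 2 < c := by
    rw [hc]
    have h1 : -(‖w‖ * ‖u‖) ≤ (inner ℝ w u : ℝ) := neg_le_of_abs_le hcw
    nlinarith
  have hcpos : 0 < c := lt_trans (by positivity) hcbig
  set t0 : ℝ := ‖u‖ ^ 2 / (2 * c) with ht0def
  have ht00 : 0 < t0 := by positivity
  have ht01 : t0 < 1 := by
    rw [ht0def, div_lt_one (by positivity)]; linarith
  have hkey : ∀ t : ℝ, inner ℝ (v i + t • (v' (i + 1) - v i) - m) u = t * c - ‖u‖ ^ 2 / 2 := by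
    intro t
    have hid : v i + t • (v' (i + 1) - v i) - m
        = t • (v' (i + 1) - v i) - (2⁻¹ : ℝ) • u := by
      rw [hmdef, midpoint_eq_inv_two_smul, hudef]; module
    rw [hid, inner_sub_left, real_inner_smul_left, real_inner_smul_left,
      real_inner_self_eq_norm_sq, ← hcdef]
    ring
  set qs : EuclideanSpace ℝ (Fin 3) := v i + t0 • (v' (i + 1) - v i) with hqsdef
  clear_value m u w c t0 qs
  have hqsinner : inner ℝ (qs - m) u = (0 : ℝ) := by
    rw [hqsdef, hkey t0, ht0def]
    field_simp
    ring
  have hqsnorm : ‖qs - m‖ ≤ r := by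
    have hdec : qs - m = (t0 - 2⁻¹) • u + t0 • w := by
      rw [hqsdef, hmdef, midpoint_eq_inv_two_smul, hudef, hwdef]; module
    have hsq : ‖qs - m‖ ^ 2 ≤ t0 * (‖qs - m‖ * ‖w‖) := by
      have h1 : (inner ℝ (qs - m) (qs - m) : ℝ) = ‖qs - m‖ ^ 2 :=
        real_inner_self_eq_norm_sq _
      have h2 : (inner ℝ (qs - m) (qs - m) : ℝ)
          = (t0 - 2⁻¹) * inner ℝ (qs - m) u + t0 * inner ℝ (qs - m) w := by
        nth_rewrite 2 [hdec]
        rw [inner_add_right, real_inner_smul_right, real_inner_smul_right]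
      rw [hqsinner, mul_zero, zero_add] at h2
      have h3 : (inner ℝ (qs - m) w : ℝ) ≤ ‖qs - m‖ * ‖w‖ := real_inner_le_norm _ _
      nlinarith
    by_contra hcon
    push_neg at hcon
    have hN : 0 < ‖qs - m‖ := lt_trans hr hcon
    have h5 : t0 * (‖qs - m‖ * ‖w‖) ≤ 1 * (‖qs - m‖ * ‖w‖) :=
      mul_le_mul_of_nonneg_right ht01.le (by positivity)
    have h6 : ‖qs - m‖ * ‖w‖ < ‖qs - m‖ * r :=
      mul_lt_mul_of_pos_left hwr hN
    have h7 : ‖qs - m‖ * r < ‖qs - m‖ * ‖qs - m‖ :=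
      mul_lt_mul_of_pos_left hcon hN
    nlinarith
  have hqsD : dist qs m ≤ r ∧ inner ℝ (qs - m) u = (0 : ℝ) := by
    rw [dist_eq_norm]; exact ⟨hqsnorm, hqsinner⟩
  have hqsloop : qs ∈ ⋃ j : ZMod n, segment ℝ (v' j) (v j) ∪ segment ℝ (v j) (v' (j + 1)) := by
    rw [mem_iUnion]
    refine ⟨i, Or.inr ?_⟩
    rw [hqsdef]
    exact seg_mem' ht00.le ht01.le
  refine ⟨qs, ⟨hqsD, hqsloop⟩, ?_⟩
  intro q hq
  have hseg : q ∈ segment ℝ (v i) (v' (i + 1)) := hB3 q hq.1.1 hq.2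
  obtain ⟨t, ht0', ht1', rfl⟩ := seg_param' hseg
  have h0 := hq.1.2
  rw [hkey t] at h0
  have ht : t = t0 := by
    have : t * c = ‖u‖ ^ 2 / 2 := by linarith
    rw [ht0def]
    field_simp
    linarith
  rw [ht]
  exact hqsdef.symm
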